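/- Robust oracle safety: Suppose u ∈ ℝⁿ satisfies v̲ + (η + ρ‖u‖₂)1 ≤ v(t) + X̂ u ≤ v̄ − (η + ρ‖u‖₂)1 componentwise. Then for every symmetric matrix X with ‖X − X̂‖_△ ≤ ρ and every w ∈ ℝⁿ with ‖w‖_∞ ≤ η, the next state v(t+1) = v(t) + X u + w satisfies v̲ ≤ v(t+1) ≤ v̄ componentwise. -/

import Mathlib

/-- The upper-triangle norm `‖A‖_△ = sqrt (Σ_{i ≤ j} A i j ^ 2)`. -/
noncomputable def triNorm {n : ℕ} (A : Matrix (Fin n) (Fin n) ℝ) : ℝ :=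
  Real.sqrt (∑ k, ∑ j ∈ Finset.Ici k, A k j ^ 2)

lemma row_le_tri {n : ℕ} (E : Matrix (Fin n) (Fin n) ℝ) (hE : E.IsSymm) (i : Fin n) :
    ∑ j, E i j ^ 2 ≤ ∑ k, ∑ j ∈ Finset.Ici k, E k j ^ 2 := by
  have hdisj : Disjoint (Finset.Iio i) (Finset.Ici i) := by
    rw [Finset.disjoint_left]
    intro a ha hb
    exact absurd (Finset.mem_Ici.1 hb) (not_le.2 (Finset.mem_Iio.1 ha))
  have hsplit : ∀ (f : Fin n → ℝ), ∑ j, f j = ∑ j ∈ Finset.Iio i, f j + ∑ j ∈ Finset.Ici i, f j := by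
    intro f
    rw [← Finset.sum_union hdisj]
    apply (Finset.sum_subset (Finset.subset_univ _) ?_).symm
    intro x _ hx
    exact absurd (by simp [lt_or_ge]) hx
  rw [hsplit (fun j => E i j ^ 2), hsplit (fun k => ∑ j ∈ Finset.Ici k, E k j ^ 2)]
  refine add_le_add (Finset.sum_le_sum ?_) ?_
  · intro k hk
    have : E i k = E k i := hE.apply k i
    rw [this]
    exact Finset.single_le_sum (f := fun j => E k j ^ 2) (fun j _ => sq_nonneg _)
      (Finset.mem_Ici.2 (le_of_lt (Finset.mem_Iio.1 hk)))
  · exact Finset.single_le_sum (f := fun k => ∑ j ∈ Finset.Ici k, E k j ^ 2)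
      (fun k _ => Finset.sum_nonneg fun j _ => sq_nonneg _) (Finset.mem_Ici.2 le_rfl)

/-- Robust oracle safety: if the predicted voltage `v(t) + X̂ u` obeys the limits padded by
`η + ρ‖u‖₂`, then for every model `X` with `‖X - X̂‖_△ ≤ ρ` and every noise `w` with
`‖w‖_∞ ≤ η`, the next state `v(t+1) = v(t) + X u + w` remains within the voltage limits. -/
theorem robust_oracle_safe {n : ℕ}
    (vt u vlo vhi : Fin n → ℝ)
    (Xhat : Matrix (Fin n) (Fin n) ℝ) (hXhsym : Xhat.IsSymm)
    (η ρ : ℝ) (hη : 0 ≤ η) (hρ : 0 ≤ ρ)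
    (hsafe : ∀ i,
      vlo i + (η + ρ * Real.sqrt (∑ j, u j ^ 2)) ≤ (vt + Xhat.mulVec u) i ∧
      (vt + Xhat.mulVec u) i ≤ vhi i - (η + ρ * Real.sqrt (∑ j, u j ^ 2))) :
    ∀ X : Matrix (Fin n) (Fin n) ℝ, X.IsSymm → triNorm (X - Xhat) ≤ ρ →
    ∀ w : Fin n → ℝ, (∀ i, |w i| ≤ η) →
    ∀ i, vlo i ≤ (vt + X.mulVec u + w) i ∧ (vt + X.mulVec u + w) i ≤ vhi i := by
  intro X hXsym hXρ w hw i
  set E := X - Xhat with hEdef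
  have hEsym : E.IsSymm := hXsym.sub hXhsym
  set s := Real.sqrt (∑ j, u j ^ 2) with hs
  have hs0 : 0 ≤ s := Real.sqrt_nonneg _
  -- Cauchy-Schwarz on row i of E
  have hrow : |E.mulVec u i| ≤ ρ * s := by
    have hcs : (∑ j, E i j * u j) ^ 2 ≤ (∑ j, E i j ^ 2) * ∑ j, u j ^ 2 :=
      Finset.sum_mul_sq_le_sq_mul_sq Finset.univ _ _
    have h1 : |∑ j, E i j * u j| ≤ Real.sqrt (∑ j, E i j ^ 2) * s := by
      rw [← Real.sqrt_sq_eq_abs, hs, ← Real.sqrt_mul (Finset.sum_nonneg fun j _ => sq_nonneg _)]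
      exact Real.sqrt_le_sqrt hcs
    have h2 : Real.sqrt (∑ j, E i j ^ 2) ≤ ρ :=
      le_trans (Real.sqrt_le_sqrt (row_le_tri E hEsym i)) hXρ
    have : E.mulVec u i = ∑ j, E i j * u j := rfl
    rw [this]
    exact h1.trans (mul_le_mul_of_nonneg_right h2 hs0)
  have hEi : X.mulVec u i = Xhat.mulVec u i + E.mulVec u i := by
    have : X = Xhat + E := by rw [hEdef]; abel
    rw [this, Matrix.add_mulVec]; rfl
  obtain ⟨hlo, hhi⟩ := hsafe i
  have hwi := hw i
  have habs := abs_le.1 hrow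
  have habs2 := abs_le.1 hwi
  simp only [Pi.add_apply] at hlo hhi ⊢
  constructor <;> [nlinarith [habs.1, habs2.1]; nlinarith [habs.2, habs2.2]]
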